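/- Let (x_n) be a sequence of real numbers with |x_n| ≤ M for all n, and suppose ψ : ℝ × ℝ → ℝ satisfies Cr_∞([α,β], x) ≤ ψ(α,β) for all α < β. Then for every ε > 0, Fluc_∞(ε, x) ≤ l · max{ψ(α,β) | [α,β] ∈ P(M,l)}, where l := ⌈4M/ε⌉. -/
import Mathlib


/-- There exist `k` many ε-fluctuations in the sequence `x`. -/
def HasFluc (ε : ℝ) (x : ℕ → ℝ) (k : ℕ) : Prop :=
  ∃ i j : ℕ → ℕ, (∀ l < k, i l < j l) ∧ (∀ l, l + 1 < k → j l ≤ i (l + 1)) ∧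
    ∀ l < k, ε ≤ |x (i l) - x (j l)|

/-- There exist `k` many `[α,β]`-crossings in the sequence `x`. -/
def HasCross (α β : ℝ) (x : ℕ → ℝ) (k : ℕ) : Prop :=
  ∃ i j : ℕ → ℕ, (∀ l < k, i l < j l) ∧ (∀ l, l + 1 < k → j l ≤ i (l + 1)) ∧
    ∀ l < k, (x (i l) ≤ α ∧ β ≤ x (j l)) ∨ (β ≤ x (i l) ∧ x (j l) ≤ α)

/-- Auxiliary: a jump of size ε must fully cross one of the partition intervals. -/
lemma exists_cross_interval (M ε : ℝ) (hM : 0 < M) (hε : 0 < ε) (l : ℕ)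
    (hl0 : 0 < l) (hεl : 4 * M ≤ ε * l) (a b : ℝ) (ha : -M ≤ a) (hb : b ≤ M)
    (hab : ε ≤ b - a) :
    ∃ m : ℕ, m < l ∧ a ≤ -M + 2 * M * (m : ℝ) / (l : ℝ) ∧
      -M + 2 * M * ((m : ℝ) + 1) / (l : ℝ) ≤ b := by
  have hlR : (0 : ℝ) < l := by exact_mod_cast hl0
  set m : ℕ := ⌈(a + M) * l / (2 * M)⌉₊ with hm
  have harg : 0 ≤ (a + M) * l / (2 * M) :=
    div_nonneg (mul_nonneg (by linarith) hlR.le) (by positivity)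
  have h1 : (a + M) * l / (2 * M) ≤ (m : ℝ) := Nat.le_ceil _
  have h2 : (m : ℝ) < (a + M) * l / (2 * M) + 1 := Nat.ceil_lt_add_one harg
  have h1' : (a + M) * l ≤ (m : ℝ) * (2 * M) := by
    rwa [div_le_iff₀ (by positivity)] at h1
  have h2' : (m : ℝ) * (2 * M) < (a + M) * l + 2 * M := by
    have := mul_lt_mul_of_pos_right h2 (show (0:ℝ) < 2 * M by positivity)
    rwa [add_mul, one_mul, div_mul_cancel₀ _ (by positivity : (2:ℝ)*M ≠ 0)] at this
  have hab' : a + ε ≤ b := by linarith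
  have habl : (a + ε) * l ≤ b * l := mul_le_mul_of_nonneg_right hab' (le_of_lt hlR)
  have hbMl : (a + M) * l ≤ (2 * M - ε) * l := by
    have : a ≤ M - ε := by linarith
    nlinarith
  refine ⟨m, ?_, ?_, ?_⟩
  · -- m < l
    have : (m : ℝ) * (2 * M) < (l : ℝ) * (2 * M) := by nlinarith
    have : (m : ℝ) < l := by
      have h2M : (0:ℝ) < 2 * M := by positivity
      exact lt_of_mul_lt_mul_right this (le_of_lt h2M)
    exact_mod_cast this
  · have : a + M ≤ 2 * M * m / l := by
      rw [le_div_iff₀ hlR]; linarith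
    linarith
  · have : 2 * M * ((m : ℝ) + 1) / l ≤ b + M := by
      rw [div_le_iff₀ hlR]
      nlinarith
    linarith


/-- If `|x n| ≤ M` for all `n` and `Cr_∞([α,β], x) ≤ ψ(α,β)` for all `α < β`, then for every
`ε > 0`, `Fluc_∞(ε, x) ≤ l · max{ψ(α,β) | [α,β] ∈ 𝒫(M,l)}` where `l = ⌈4M/ε⌉`.
(The bound by `l` times the maximum is expressed via an arbitrary upper bound `C` of the
values of `ψ` on the subintervals of the partition `𝒫(M,l)` of `[-M,M]`.) -/

theorem stmt3 (x : ℕ → ℝ) (M : ℝ) (hM : 0 < M) (hx : ∀ n, |x n| ≤ M)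
    (ψ : ℝ → ℝ → ℝ)
    (hψ : ∀ α β : ℝ, α < β → ∀ k : ℕ, HasCross α β x k → (k : ℝ) ≤ ψ α β)
    (ε : ℝ) (hε : 0 < ε) (l : ℕ) (hl : l = ⌈4 * M / ε⌉₊)
    (C : ℝ)
    (hC : ∀ i : ℕ, i < l →
      ψ (-M + 2 * M * (i : ℝ) / (l : ℝ)) (-M + 2 * M * ((i : ℝ) + 1) / (l : ℝ)) ≤ C) :
    ∀ k : ℕ, HasFluc ε x k → (k : ℝ) ≤ (l : ℝ) * C := by
  intro k hk
  obtain ⟨i, j, hij, hord, hfluc⟩ := hk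
  have hl0 : 0 < l := by
    rw [hl]; exact Nat.ceil_pos.mpr (by positivity)
  have hlR : (0 : ℝ) < l := by exact_mod_cast hl0
  have hεl : 4 * M ≤ ε * l := by
    have h1 : (4 * M / ε : ℝ) ≤ l := by rw [hl]; exact Nat.le_ceil _
    calc 4 * M = ε * (4 * M / ε) := by field_simp
    _ ≤ ε * l := by gcongr
  -- chain lemma
  have chain : ∀ s', ∀ s, s < s' → s' < k → j s ≤ i s' := by
    intro s'
    induction s' with
    | zero => intro s hs _; omega
    | succ m ih =>
      intro s hs hm
      rcases Nat.lt_succ_iff_lt_or_eq.mp hs with h | h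
      · exact le_trans (le_trans (ih s h (by omega)) (le_of_lt (hij m (by omega))))
          (hord m hm)
      · subst h; exact hord s hm
  -- assign each fluctuation an interval it crosses
  have key : ∀ t : Fin k, ∃ m : Fin l,
      (x (i t) ≤ -M + 2 * M * (m : ℝ) / (l : ℝ) ∧
        -M + 2 * M * ((m : ℝ) + 1) / (l : ℝ) ≤ x (j t)) ∨
      (-M + 2 * M * ((m : ℝ) + 1) / (l : ℝ) ≤ x (i t) ∧
        x (j t) ≤ -M + 2 * M * (m : ℝ) / (l : ℝ)) := by
    intro t
    have hflt := hfluc t t.isLt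
    have hi := abs_le.mp (hx (i t))
    have hj := abs_le.mp (hx (j t))
    rcases le_total (x (i t)) (x (j t)) with h | h
    · have habs : ε ≤ x (j t) - x (i t) := by
        rw [abs_sub_comm] at hflt
        calc ε ≤ |x (j t) - x (i t)| := hflt
        _ = x (j t) - x (i t) := abs_of_nonneg (by linarith)
      obtain ⟨m, hml, hm1, hm2⟩ := exists_cross_interval M ε hM hε l hl0 hεl
        (x (i t)) (x (j t)) hi.1 hj.2 habs
      exact ⟨⟨m, hml⟩, Or.inl ⟨hm1, hm2⟩⟩
    · have habs : ε ≤ x (i t) - x (j t) := by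
        calc ε ≤ |x (i t) - x (j t)| := hflt
        _ = x (i t) - x (j t) := abs_of_nonneg (by linarith)
      obtain ⟨m, hml, hm1, hm2⟩ := exists_cross_interval M ε hM hε l hl0 hεl
        (x (j t)) (x (i t)) hj.1 hi.2 habs
      exact ⟨⟨m, hml⟩, Or.inr ⟨hm2, hm1⟩⟩
  choose f hf using key
  -- pigeonhole
  obtain ⟨mm, -, hmm⟩ := Finset.exists_max_image Finset.univ
    (fun m : Fin l => (Finset.univ.filter fun t => f t = m).card)
    ⟨⟨0, hl0⟩, Finset.mem_univ _⟩
  set S : Finset (Fin k) := Finset.univ.filter fun t => f t = mm with hS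
  have hk_le : k ≤ l * S.card := by
    have hsum : (Finset.univ : Finset (Fin k)).card =
        ∑ m : Fin l, (Finset.univ.filter fun t => f t = m).card :=
      Finset.card_eq_sum_card_fiberwise (fun t _ => Finset.mem_univ (f t))
    calc k = (Finset.univ : Finset (Fin k)).card := by simp
    _ = ∑ m : Fin l, (Finset.univ.filter fun t => f t = m).card := hsum
    _ ≤ (Finset.univ : Finset (Fin l)).card • S.card :=
      Finset.sum_le_card_nsmul _ _ _ (fun m _ => hmm m (Finset.mem_univ m))
    _ = l * S.card := by simp [Finset.card_univ, smul_eq_mul]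
  set c := S.card with hc
  set e := S.orderEmbOfFin (rfl : S.card = c) with he
  set α : ℝ := -M + 2 * M * (mm : ℝ) / (l : ℝ) with hα
  set β : ℝ := -M + 2 * M * ((mm : ℝ) + 1) / (l : ℝ) with hβ
  have hαβ : α < β := by
    rw [hα, hβ]
    have h : 2 * M * (mm : ℝ) / l < 2 * M * ((mm : ℝ) + 1) / l := by
      apply div_lt_div_of_pos_right ?_ hlR
      nlinarith
    linarith
  -- crossing
  have hcross : HasCross α β x c := by
    refine ⟨fun t => if h : t < c then i (e ⟨t, h⟩) else 0,
      fun t => if h : t < c then j (e ⟨t, h⟩) else 0, ?_, ?_, ?_⟩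
    · intro t ht
      simp only [dif_pos ht]
      exact hij _ (e ⟨t, ht⟩).isLt
    · intro t ht
      have ht' : t < c := by omega
      simp only [dif_pos ht, dif_pos ht']
      have hlt : e ⟨t, ht'⟩ < e ⟨t + 1, ht⟩ := by
        apply e.strictMono
        exact Fin.mk_lt_mk.mpr (Nat.lt_succ_self t)
      exact chain _ _ hlt (e ⟨t + 1, ht⟩).isLt
    · intro t ht
      simp only [dif_pos ht]
      have hmem : e ⟨t, ht⟩ ∈ S := S.orderEmbOfFin_mem _ _
      have hfe : f (e ⟨t, ht⟩) = mm := (Finset.mem_filter.mp hmem).2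
      have := hf (e ⟨t, ht⟩)
      rw [hfe] at this
      exact this
  have h1 : (c : ℝ) ≤ ψ α β := hψ α β hαβ c hcross
  have h2 : ψ α β ≤ C := by
    have := hC mm.val mm.isLt
    convert this using 3
  have hkc : (k : ℝ) ≤ (l : ℝ) * c := by exact_mod_cast hk_le
  calc (k : ℝ) ≤ (l : ℝ) * c := hkc
  _ ≤ (l : ℝ) * C := by
    apply mul_le_mul_of_nonneg_left (h1.trans h2) hlR.le
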